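/- Let a > 0, let f : ℂ → ℂ be complex-differentiable on the open ball B(0,a), and assume that z ↦ ‖f(z)‖² is integrable on B(0,a). Then for every z with ‖z‖ ≤ 2^{−1/3} · a, one has ‖ ∫_{t ∈ [0,1]} f(t·z) · z dt ‖ ≤ ‖f‖_{L²(B_a)}. -/

import Mathlib

open Complex Metric MeasureTheory
open Set Real intervalIntegral

theorem circle_mv {g : ℂ → ℂ} {c : ℂ} {ρ : ℝ} (hρ : 0 < ρ)
    (hg : DiffContOnCl ℂ g (ball c ρ)) :
    ∫ θ in (0:ℝ)..(2*π), g (circleMap c ρ θ) = (2*π : ℝ) • g c := by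
  have h := hg.circleIntegral_sub_inv_smul (mem_ball_self hρ)
  rw [circleIntegral] at h
  have key : ∀ θ : ℝ, deriv (circleMap c ρ) θ • ((circleMap c ρ θ - c)⁻¹ • g (circleMap c ρ θ))
      = I • g (circleMap c ρ θ) := by
    intro θ
    rw [deriv_circleMap, circleMap_sub_center, smul_smul]
    congr 1
    have hne : circleMap 0 ρ θ ≠ 0 := by
      simpa using circleMap_ne_center (c := 0) hρ.ne' (θ := θ)
    field_simp
  simp_rw [key, intervalIntegral.integral_smul] at h
  have hI : (I : ℂ) ≠ 0 := I_ne_zero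
  have h2 : (I : ℂ) * ∫ θ in (0:ℝ)..(2*π), g (circleMap c ρ θ) = I * ((2*π:ℝ) • g c) := by
    rw [smul_eq_mul] at h
    rw [h, Complex.real_smul, smul_eq_mul]
    push_cast
    ring
  exact mul_left_cancel₀ hI h2


theorem disk_mv {g : ℂ → ℂ} {w : ℂ} {R : ℝ} (hR : 0 < R)
    (hg : DiffContOnCl ℂ g (ball w R)) :
    ∫ z in ball w R, g z = (π * R^2 : ℝ) • g w := by
  have hgc : ContinuousOn g (closedBall w R) := by
    have := hg.continuousOn (s := ball w R)
    rwa [closure_ball w hR.ne'] at this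
  have step1 : ∫ z in ball w R, g z = ∫ u in ball (0:ℂ) R, g (w + u) := by
    rw [← MeasureTheory.integral_indicator measurableSet_ball, ← MeasureTheory.integral_indicator measurableSet_ball,
      ← MeasureTheory.integral_add_left_eq_self (μ := volume)
        (fun z => Set.indicator (ball w R) g z) w]
    congr 1
    ext u
    by_cases h : u ∈ ball (0:ℂ) R
    · rw [Set.indicator_of_mem h, Set.indicator_of_mem]
      simpa [mem_ball, dist_eq_norm] using h
    · rw [Set.indicator_of_notMem h, Set.indicator_of_notMem]
      intro hc
      exact h (by simpa [mem_ball, dist_eq_norm] using hc)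
  set φ : ℝ × ℝ → ℂ := fun p => ↑p.1 * (↑(Real.cos p.2) + ↑(Real.sin p.2) * I) with hφ
  have hφc : Continuous φ := by fun_prop
  have hsymm : ∀ p, Complex.polarCoord.symm p = φ p := fun p => Complex.polarCoord_symm_apply p
  set F : ℝ × ℝ → ℂ := fun p => p.1 • g (w + φ p) with hF
  have hrect : MeasurableSet (Ioo (0:ℝ) R ×ˢ Ioo (-π) π) :=
    measurableSet_Ioo.prod measurableSet_Ioo
  have htarget : polarCoord.target = Ioi (0:ℝ) ×ˢ Ioo (-π) π := rfl
  have step2 : ∫ u in ball (0:ℂ) R, g (w + u)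
      = ∫ p in Ioo (0:ℝ) R ×ˢ Ioo (-π) π, F p := by
    rw [← MeasureTheory.integral_indicator measurableSet_ball,
      ← Complex.integral_comp_polarCoord_symm]
    have hcongr : ∀ p ∈ polarCoord.target,
        p.1 • (ball (0:ℂ) R).indicator (fun u => g (w + u)) (Complex.polarCoord.symm p)
        = (Ioo (0:ℝ) R ×ˢ Ioo (-π) π).indicator F p := by
      rintro ⟨r, θ⟩ hp
      rw [htarget] at hp
      obtain ⟨hr, hθ⟩ := hp
      simp only [mem_Ioi] at hr
      have habs : ‖Complex.polarCoord.symm (r, θ)‖ = r := by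
        rw [Complex.norm_polarCoord_symm, abs_of_pos hr]
      by_cases h : r < R
      · rw [Set.indicator_of_mem, Set.indicator_of_mem, hF, hsymm]
        · exact ⟨⟨hr, h⟩, hθ⟩
        · simp only [mem_ball, dist_eq_norm, sub_zero, habs]
          exact h
      · rw [Set.indicator_of_notMem, Set.indicator_of_notMem, smul_zero]
        · intro hc; exact h hc.1.2
        · simp only [mem_ball, dist_eq_norm, sub_zero, habs]
          exact h
    rw [setIntegral_congr_fun polarCoord.open_target.measurableSet hcongr,
      setIntegral_indicator hrect, inter_eq_self_of_subset_right]
    rw [htarget]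
    exact prod_mono (Ioo_subset_Ioi_self) subset_rfl
  -- integrability on the rectangle
  have hK : IsCompact (Icc (0:ℝ) R ×ˢ Icc (-π) π) := isCompact_Icc.prod isCompact_Icc
  have hmap : ∀ p ∈ Icc (0:ℝ) R ×ˢ Icc (-π) π, w + φ p ∈ closedBall w R := by
    rintro ⟨r, θ⟩ ⟨hr, hθ⟩
    simp only [mem_closedBall, dist_eq_norm, add_sub_cancel_left]
    have : ‖φ (r,θ)‖ = |r| := by
      rw [← hsymm, Complex.norm_polarCoord_symm]
    rw [this, _root_.abs_of_nonneg hr.1]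
    exact hr.2
  have hFc : ContinuousOn F (Icc (0:ℝ) R ×ˢ Icc (-π) π) := by
    apply ContinuousOn.smul continuous_fst.continuousOn
    exact hgc.comp ((continuous_const.add hφc).continuousOn) hmap
  have hFi : IntegrableOn F (Ioo (0:ℝ) R ×ˢ Ioo (-π) π) :=
    (hFc.integrableOn_compact hK).mono_set
      (prod_mono Ioo_subset_Icc_self Ioo_subset_Icc_self)
  have step3 : ∫ p in Ioo (0:ℝ) R ×ˢ Ioo (-π) π, F p
      = ∫ r in Ioo (0:ℝ) R, ∫ θ in Ioo (-π) π, F (r, θ) := by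
    rw [Measure.volume_eq_prod]
    exact setIntegral_prod F (by rwa [← Measure.volume_eq_prod])
  -- inner integral
  have hinner : ∀ r ∈ Ioo (0:ℝ) R,
      ∫ θ in Ioo (-π) π, F (r, θ) = (2 * π * r : ℝ) • g w := by
    rintro r ⟨hr0, hrR⟩
    have hcm : ∀ θ : ℝ, w + φ (r, θ) = circleMap w r θ := by
      intro θ
      rw [circleMap, hφ]
      simp only [Complex.exp_mul_I]
      push_cast
      ring
    have dcl : DiffContOnCl ℂ g (ball w r) :=
      ⟨hg.differentiableOn.mono (ball_subset_ball hrR.le),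
        by rw [closure_ball w hr0.ne']
           exact hgc.mono (closedBall_subset_closedBall hrR.le)⟩
    calc ∫ θ in Ioo (-π) π, F (r, θ)
        = ∫ θ in Ioo (-π) π, r • g (circleMap w r θ) := by
          apply setIntegral_congr_fun measurableSet_Ioo
          intro θ _
          rw [hF]
          simp only
          rw [hcm]
      _ = r • ∫ θ in Ioo (-π) π, g (circleMap w r θ) := integral_smul r _
      _ = r • ∫ θ in (-π:ℝ)..π, g (circleMap w r θ) := by
          rw [intervalIntegral.integral_of_le (by linarith [Real.pi_pos] : (-π:ℝ) ≤ π),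
            MeasureTheory.integral_Ioc_eq_integral_Ioo]
      _ = r • ∫ θ in (0:ℝ)..(2*π), g (circleMap w r θ) := by
          congr 1
          have hper : Function.Periodic (fun θ => g (circleMap w r θ)) (2*π) :=
            (periodic_circleMap w r).comp g
          have := hper.intervalIntegral_add_eq (-π) 0
          simpa [show -π + 2*π = π by ring] using this
      _ = r • ((2*π : ℝ) • g w) := by rw [circle_mv hr0 dcl]
      _ = (2 * π * r : ℝ) • g w := by
          rw [smul_smul]
          congr 1
          ring
  calc ∫ z in ball w R, g z = ∫ r in Ioo (0:ℝ) R, ∫ θ in Ioo (-π) π, F (r, θ) := by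
        rw [step1, step2, step3]
    _ = ∫ r in Ioo (0:ℝ) R, (2 * π * r : ℝ) • g w :=
        setIntegral_congr_fun measurableSet_Ioo hinner
    _ = (∫ r in Ioo (0:ℝ) R, (2 * π * r : ℝ)) • g w := integral_smul_const _ _
    _ = (π * R^2 : ℝ) • g w := by
        congr 1
        rw [← MeasureTheory.integral_Ioc_eq_integral_Ioo,
          ← intervalIntegral.integral_of_le hR.le]
        rw [intervalIntegral.integral_const_mul, integral_id]
        ring


theorem pointwise_bound {a : ℝ} (ha : 0 < a) {f : ℂ → ℂ}
    (hf : DifferentiableOn ℂ f (ball (0:ℂ) a))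
    (hf2 : IntegrableOn (fun z => ‖f z‖ ^ 2) (ball (0:ℂ) a))
    {w : ℂ} {ρ : ℝ} (hρ : 0 < ρ) (hw : ‖w‖ + ρ ≤ a) :
    ‖f w‖ ≤ Real.sqrt (∫ z in ball (0:ℂ) a, ‖f z‖^2) / (Real.sqrt π * ρ) := by
  set M := Real.sqrt (∫ z in ball (0:ℂ) a, ‖f z‖^2) with hM
  have hM0 : 0 ≤ M := Real.sqrt_nonneg _
  have hint_nonneg : 0 ≤ ∫ z in ball (0:ℂ) a, ‖f z‖^2 :=
    setIntegral_nonneg measurableSet_ball (fun x _ => by positivity)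
  have hMsq : M^2 = ∫ z in ball (0:ℂ) a, ‖f z‖^2 := Real.sq_sqrt hint_nonneg
  -- inner bound for ρ' < ρ
  have key : ∀ ρ' ∈ Ioo (0:ℝ) ρ, ‖f w‖ ≤ M / (Real.sqrt π * ρ') := by
    rintro ρ' ⟨h0, hρ'⟩
    have hsub : closedBall w ρ' ⊆ ball (0:ℂ) a := by
      intro x hx
      simp only [mem_closedBall, dist_eq_norm] at hx
      simp only [mem_ball, dist_eq_norm, sub_zero]
      calc ‖x‖ = ‖x - w + w‖ := by ring_nf
        _ ≤ ‖x - w‖ + ‖w‖ := norm_add_le _ _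
        _ ≤ ρ' + ‖w‖ := by linarith
        _ < ρ + ‖w‖ := by linarith
        _ ≤ a := by linarith
    have hbsub : ball w ρ' ⊆ ball (0:ℂ) a := ball_subset_closedBall.trans hsub
    set g : ℂ → ℂ := fun z => f z * f z with hg
    have hdcl : DiffContOnCl ℂ g (ball w ρ') := by
      constructor
      · exact ((hf.mono hbsub).mul (hf.mono hbsub))
      · rw [closure_ball w h0.ne']
        exact ((hf.continuousOn.mono hsub).mul (hf.continuousOn.mono hsub))
    have hmv := disk_mv h0 hdcl
    have hnorm : (π * ρ'^2) * ‖f w‖^2 = ‖∫ z in ball w ρ', g z‖ := by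
      rw [hmv, norm_smul, hg]
      simp only [norm_mul, Real.norm_eq_abs]
      rw [abs_of_pos Real.pi_pos, abs_of_pos (by positivity : (0:ℝ) < ρ'^2)]
      ring
    have hintg : IntegrableOn g (ball w ρ') := by
      have h1 : IntegrableOn g (closedBall w ρ') :=
        ContinuousOn.integrableOn_compact (isCompact_closedBall w ρ')
          ((hf.continuousOn.mono hsub).mul (hf.continuousOn.mono hsub))
      exact h1.mono_set ball_subset_closedBall
    have hle1 : ‖∫ z in ball w ρ', g z‖ ≤ ∫ z in ball w ρ', ‖f z‖^2 := by
      calc ‖∫ z in ball w ρ', g z‖ ≤ ∫ z in ball w ρ', ‖g z‖ :=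
            norm_integral_le_integral_norm _
        _ = ∫ z in ball w ρ', ‖f z‖^2 := by
            apply setIntegral_congr_fun measurableSet_ball
            intro x _
            rw [hg]
            simp [norm_mul, sq]
    have hle2 : ∫ z in ball w ρ', ‖f z‖^2 ≤ ∫ z in ball (0:ℂ) a, ‖f z‖^2 :=
      setIntegral_mono_set hf2
        (Filter.Eventually.of_forall (fun x => by positivity))
        (HasSubset.Subset.eventuallyLE hbsub)
    have hsq : ‖f w‖^2 ≤ (M / (Real.sqrt π * ρ'))^2 := by
      have hpos : (0:ℝ) < π * ρ'^2 := by positivity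
      rw [div_pow, mul_pow, Real.sq_sqrt Real.pi_pos.le, hMsq]
      rw [le_div_iff₀ (by positivity)]
      calc ‖f w‖^2 * (π * ρ'^2) = π * ρ'^2 * ‖f w‖^2 := by ring
        _ = ‖∫ z in ball w ρ', g z‖ := hnorm
        _ ≤ ∫ z in ball (0:ℂ) a, ‖f z‖^2 := hle1.trans hle2
    calc ‖f w‖ = Real.sqrt (‖f w‖^2) := (Real.sqrt_sq (norm_nonneg _)).symm
      _ ≤ Real.sqrt ((M / (Real.sqrt π * ρ'))^2) := Real.sqrt_le_sqrt hsq
      _ = M / (Real.sqrt π * ρ') := Real.sqrt_sq (div_nonneg hM0 (by positivity))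
  -- limit ρ' → ρ
  have htend : Filter.Tendsto (fun ρ' => M / (Real.sqrt π * ρ')) (nhdsWithin ρ (Iio ρ))
      (nhds (M / (Real.sqrt π * ρ))) := by
    apply Filter.Tendsto.mono_left _ nhdsWithin_le_nhds
    exact (tendsto_const_nhds.div ((tendsto_const_nhds.mul Filter.tendsto_id)) (by positivity))
  refine ge_of_tendsto htend ?_
  filter_upwards [Ioo_mem_nhdsLT_of_mem (by constructor <;> linarith : ρ ∈ Ioc (0:ℝ) ρ)]
    with ρ' hρ' using key ρ' hρ'


/-- Local form of (eq:int-beta2): for `f` holomorphic on `ball 0 a` with `‖f‖²` integrable,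
and `‖z‖ ≤ 2^{-1/3} a`, the segment integral satisfies
`‖∫₀¹ f(tz)·z dt‖ ≤ ‖f‖_{L²(B_a)}`. -/
theorem segment_integral_le_L2 (a : ℝ) (ha : 0 < a) (f : ℂ → ℂ)
    (hf : DifferentiableOn ℂ f (ball (0 : ℂ) a))
    (hf2 : IntegrableOn (fun z => ‖f z‖ ^ 2) (ball (0 : ℂ) a)) :
    ∀ z : ℂ, ‖z‖ ≤ (2 : ℝ) ^ (-(1 : ℝ) / 3) * a →
      ‖∫ t in (0:ℝ)..1, f ((t : ℂ) * z) * z‖ ≤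
        Real.sqrt (∫ w in ball (0 : ℂ) a, ‖f w‖ ^ 2) := by
  intro z hz
  set M := Real.sqrt (∫ w in ball (0:ℂ) a, ‖f w‖ ^ 2) with hM
  have hM0 : 0 ≤ M := Real.sqrt_nonneg _
  set c : ℝ := (2:ℝ) ^ (-(1:ℝ)/3) with hc
  have hc0 : 0 < c := Real.rpow_pos_of_pos (by norm_num) _
  have hc1 : c < 1 := Real.rpow_lt_one_of_one_lt_of_neg (by norm_num) (by norm_num)
  have hc3 : c ^ (3:ℕ) = 1/2 := by
    rw [hc, ← Real.rpow_natCast ((2:ℝ)^(-(1:ℝ)/3)) 3, ← Real.rpow_mul (by norm_num)]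
    norm_num
  have hcle : c ≤ 0.7938 := by nlinarith [hc3, hc0.le, sq_nonneg (c - 0.7938), sq_nonneg (c + 0.7938)]
  set r := ‖z‖ with hrdef
  have hr0 : 0 ≤ r := norm_nonneg z
  have hrc : r ≤ c * a := hz
  have hra : r < a := lt_of_le_of_lt hrc (by nlinarith)
  have harc : 0 < a - r := by linarith
  have hsp : (0:ℝ) < Real.sqrt π := Real.sqrt_pos.2 Real.pi_pos
  -- pointwise bound on segment
  have hpt : ∀ t ∈ Set.uIoc (0:ℝ) 1, ‖f ((t:ℂ)*z) * z‖ ≤ M / (Real.sqrt π * (a - t*r)) * r := by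
    intro t ht
    rw [Set.uIoc_of_le zero_le_one] at ht
    have ht0 : 0 < t := ht.1
    have ht1 : t ≤ 1 := ht.2
    have htr : t * r ≤ r := by nlinarith
    have hdt : 0 < a - t*r := by linarith
    have hnw : ‖(t:ℂ)*z‖ = t * r := by
      rw [norm_mul, Complex.norm_real, Real.norm_eq_abs, abs_of_pos ht0]
    have hb := pointwise_bound ha hf hf2 (w := (t:ℂ)*z) (ρ := a - t*r) hdt
      (by rw [hnw]; linarith)
    rw [norm_mul]
    exact mul_le_mul_of_nonneg_right hb hr0
  -- interval integrability of the bound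
  have hdpos : ∀ t ∈ Set.uIcc (0:ℝ) 1, 0 < a - t*r := by
    intro t ht
    rw [Set.uIcc_of_le zero_le_one] at ht
    nlinarith [ht.1, ht.2]
  have hgcont : ContinuousOn (fun t : ℝ => M / (Real.sqrt π * (a - t*r)) * r) (Set.uIcc 0 1) := by
    apply ContinuousOn.mul _ continuousOn_const
    apply ContinuousOn.div continuousOn_const (by fun_prop)
    intro t ht
    have := hdpos t ht
    positivity
  have hgint : IntervalIntegrable (fun t : ℝ => M / (Real.sqrt π * (a - t*r)) * r) volume 0 1 :=
    hgcont.intervalIntegrable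
  have hbound := intervalIntegral.norm_integral_le_abs_of_norm_le
    (f := fun t : ℝ => f ((t:ℂ)*z) * z) (μ := volume) (a := (0:ℝ)) (b := 1)
    ((ae_restrict_iff' measurableSet_uIoc).2 (Filter.Eventually.of_forall hpt)) hgint
  -- compute the bound integral
  have hres : ∫ t in (0:ℝ)..1, r/(a - t*r) = Real.log a - Real.log (a - r) := by
    have hder : ∀ t ∈ Set.uIcc (0:ℝ) 1,
        HasDerivAt (fun t => -Real.log (a - t*r)) (r/(a - t*r)) t := by
      intro t ht
      have h1 : 0 < a - t*r := hdpos t ht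
      have h2 : HasDerivAt (fun t:ℝ => a - t*r) (-r) t := by
        simpa using ((hasDerivAt_id t).mul_const r).const_sub a
      have h3 := (h2.log h1.ne').neg
      convert h3 using 1
      · rfl
      · rfl
      · rfl
      · ring
    have hcont : ContinuousOn (fun t:ℝ => r/(a-t*r)) (Set.uIcc 0 1) := by
      apply ContinuousOn.div continuousOn_const (by fun_prop)
      intro t ht
      exact (hdpos t ht).ne'
    rw [intervalIntegral.integral_eq_sub_of_hasDerivAt hder hcont.intervalIntegrable]
    norm_num
    ring
  have hgeq : ∫ t in (0:ℝ)..1, M / (Real.sqrt π * (a - t*r)) * r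
      = M/Real.sqrt π * (Real.log a - Real.log (a-r)) := by
    have heq : Set.EqOn (fun t : ℝ => M / (Real.sqrt π * (a - t*r)) * r)
        (fun t : ℝ => M/Real.sqrt π * (r/(a - t*r))) (Set.uIcc 0 1) := by
      intro t ht
      have h1 : (a - t*r) ≠ 0 := (hdpos t ht).ne'
      field_simp
    rw [intervalIntegral.integral_congr heq, intervalIntegral.integral_const_mul, hres]
  -- the log bound
  have hL0 : 0 ≤ Real.log a - Real.log (a-r) := by
    have := Real.log_le_log harc (by linarith : a - r ≤ a)
    linarith
  have hL : Real.log a - Real.log (a - r) ≤ Real.sqrt π := by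
    have h1 : a * (1 - c) ≤ a - r := by nlinarith
    have h1c : (0:ℝ) < 1 - c := by linarith
    have h2 : Real.log (a*(1-c)) ≤ Real.log (a - r) := Real.log_le_log (by positivity) h1
    have h3 : Real.log (a*(1-c)) = Real.log a + Real.log (1-c) :=
      Real.log_mul ha.ne' h1c.ne'
    have hs : (1.772:ℝ) ≤ Real.sqrt π := by
      rw [show (1.772:ℝ) = Real.sqrt (1.772^2) from (Real.sqrt_sq (by norm_num)).symm]
      apply Real.sqrt_le_sqrt
      nlinarith [Real.pi_gt_d6]
    have h8 : (1 + Real.sqrt π/8)^8 ≤ Real.exp (Real.sqrt π) := by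
      have hee := Real.add_one_le_exp (Real.sqrt π / 8)
      calc (1 + Real.sqrt π/8)^8 ≤ (Real.exp (Real.sqrt π/8))^8 :=
            pow_le_pow_left₀ (by positivity) (by linarith) 8
        _ = Real.exp (Real.sqrt π) := by
            rw [← Real.exp_nat_mul]
            congr 1
            push_cast
            ring
    have h485 : (4.85:ℝ) ≤ Real.exp (Real.sqrt π) := by
      have hm : ((1:ℝ) + 1.772/8)^8 ≤ (1 + Real.sqrt π/8)^8 :=
        pow_le_pow_left₀ (by norm_num) (by linarith) 8
      have hnum : (4.85:ℝ) ≤ ((1:ℝ) + 1.772/8)^8 := by norm_num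
      linarith
    have hexp : Real.exp (-(Real.sqrt π)) ≤ 1 - c := by
      rw [Real.exp_neg]
      have hinv : (Real.exp (Real.sqrt π))⁻¹ ≤ (4.85:ℝ)⁻¹ :=
        inv_anti₀ (by norm_num) h485
      have : (4.85:ℝ)⁻¹ ≤ 1 - c := by
        rw [show ((4.85:ℝ)⁻¹ = 20/97) by norm_num]
        linarith
      linarith
    have h4 : -Real.sqrt π ≤ Real.log (1 - c) := by
      rw [← Real.log_exp (-(Real.sqrt π))]
      exact Real.log_le_log (Real.exp_pos _) hexp
    linarith
  -- conclude
  calc ‖∫ t in (0:ℝ)..1, f ((t:ℂ)*z) * z‖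
      ≤ |∫ t in (0:ℝ)..1, M / (Real.sqrt π * (a - t*r)) * r| := hbound
    _ = M/Real.sqrt π * (Real.log a - Real.log (a-r)) := by
        rw [hgeq, _root_.abs_of_nonneg (mul_nonneg (div_nonneg hM0 hsp.le) hL0)]
    _ ≤ M/Real.sqrt π * Real.sqrt π :=
        mul_le_mul_of_nonneg_left hL (div_nonneg hM0 hsp.le)
    _ = M := div_mul_cancel₀ M hsp.ne'
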